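/- arXiv:2506.16230 — 2 statements merged into one kernel-verified Lean document; each statement's English description precedes it below -/
import Mathlib

section
/- Fix δ > 0. Suppose φ satisfies the smoothness assumption and is regularly varying with index p > 1, and the probability measure P₀ on ℝ is heavy-tailed with index γ > 0. Then for every γ′ ∈ ((p−1)γ/p, γ) there exists a probability measure P₁ ∈ B_{φ,δ}(P₀) whose survival function F̄_{P₁} is regularly varying with index −γ′. -/
open MeasureTheory Filter Set
open scoped ENNReal NNReal Topology Classical

noncomputable section

/-- `f` is regularly varying at infinity with index `ρ`:
`f (t*x) / f t → x ^ ρ` as `t → ∞` for every `x > 0`.  Slowly varying means index `0`. -/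
def RegVary (f : ℝ → ℝ) (ρ : ℝ) : Prop :=
  ∀ x : ℝ, 0 < x → Tendsto (fun t : ℝ => f (t * x) / f t) atTop (𝓝 (x ^ ρ))

/-- Value-at-Risk at level `1 - s`: `v_{1-s}(P) = inf {u | P((u,∞)) ≤ s}`. -/
def VaR (P : Measure ℝ) (s : ℝ) : ℝ :=
  sInf {u : ℝ | P (Ioi u) ≤ ENNReal.ofReal s}

/-- `w` is a weight function with tail parameters `κ` and slowly varying `ℓ`:
nonnegative on `(0,1]`, integrates to one, and `w(t) ~ t^κ ℓ(1/t)` as `t → 0⁺`. -/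
structure IsWeight (w : ℝ → ℝ) (κ : ℝ) (ℓ : ℝ → ℝ) : Prop where
  nonneg : ∀ t ∈ Ioc (0:ℝ) 1, 0 ≤ w t
  total : (∫ t in Ioc (0:ℝ) 1, w t) = 1
  kappa_gt : -1 < κ
  slow : RegVary ℓ 0
  asym : Tendsto (fun t : ℝ => w t / (t ^ κ * ℓ (1 / t))) (𝓝[>] (0:ℝ)) (𝓝 1)

/-- Tail-weighted risk measure `ρ_{1-β}(P) = ∫₀¹ w(t) v_{1-βt}(P) dt`, `[0,∞]`-valued. -/
def tailRisk (w : ℝ → ℝ) (β : ℝ) (P : Measure ℝ) : ℝ≥0∞ :=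
  ∫⁻ t in Ioc (0:ℝ) 1, ENNReal.ofReal (w t * VaR P (β * t))

/-- Worst-case risk over a set of measures. -/
def worstRisk (w : ℝ → ℝ) (β : ℝ) (S : Set (Measure ℝ)) : ℝ≥0∞ :=
  ⨆ P ∈ S, tailRisk w β P

/-- Worst-case Value-at-Risk over a set of measures. -/
def worstVaR (S : Set (Measure ℝ)) (s : ℝ) : ℝ :=
  ⨆ P ∈ S, VaR P s

/-- Survival function `F̄_P(x) = P((x,∞))`. -/
def survival (P : Measure ℝ) (x : ℝ) : ℝ := (P (Ioi x)).toReal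

/-- `P` is heavy-tailed with index `γ`: its survival function is `RV(-γ)`. -/
def HeavyTailed (P : Measure ℝ) (γ : ℝ) : Prop := RegVary (survival P) (-γ)

/-- Cumulative hazard `Λ_P(x) = - log P((x,∞))`. -/
def hazard (P : Measure ℝ) (x : ℝ) : ℝ := - Real.log (survival P x)

/-- `P` has Weibull-type tails with index `γ`: its cumulative hazard is `RV(γ)`. -/
def WeibullTailed (P : Measure ℝ) (γ : ℝ) : Prop := RegVary (hazard P) γ

/-- Couplings of two measures on `ℝ`. -/
def Couplings (P R : Measure ℝ) : Set (Measure (ℝ × ℝ)) :=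
  {π | π.map Prod.fst = P ∧ π.map Prod.snd = R}

/-- `p`-Wasserstein distance. -/
def Wdist (p : ℝ) (P R : Measure ℝ) : ℝ≥0∞ :=
  (⨅ π ∈ Couplings P R, ∫⁻ z : ℝ × ℝ, ENNReal.ofReal (|z.1 - z.2| ^ p) ∂π) ^ (1 / p)

/-- Wasserstein ball of radius `δ` around `P₀`. -/
def WBall (p δ : ℝ) (P₀ : Measure ℝ) : Set (Measure ℝ) :=
  {P | IsProbabilityMeasure P ∧ Wdist p P P₀ ≤ ENNReal.ofReal δ}

/-- `φ`-divergence `D_φ(P,R)`, equal to `+∞` unless `P ≪ R`. -/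
def phiDiv {α : Type*} [MeasurableSpace α] (φ : ℝ → ℝ) (P R : Measure α) : ℝ≥0∞ :=
  if P ≪ R then ∫⁻ x, ENNReal.ofReal (φ (P.rnDeriv R x).toReal) ∂ R else ⊤

/-- `φ`-divergence ball of radius `δ` around `R`. -/
def phiBall {α : Type*} [MeasurableSpace α] (φ : ℝ → ℝ) (δ : ℝ) (R : Measure α) :
    Set (Measure α) :=
  {P | IsProbabilityMeasure P ∧ phiDiv φ P R ≤ ENNReal.ofReal δ}

/-- The smoothness assumption on `φ`: twice differentiable, convex,
`φ(1) = φ'(1) = 0`, and `φ(x)/x → ∞`. -/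
structure PhiSmooth (φ : ℝ → ℝ) : Prop where
  nonneg : ∀ x : ℝ, 0 ≤ x → 0 ≤ φ x
  diff1 : Differentiable ℝ φ
  diff2 : Differentiable ℝ (deriv φ)
  convex : ConvexOn ℝ (Ici 0) φ
  at_one : φ 1 = 0
  deriv_one : deriv φ 1 = 0
  superlinear : Tendsto (fun x : ℝ => φ x / x) atTop atTop

/-- Conditional Value-at-Risk `C_{1-β}(P) = β⁻¹ ∫₀^β v_{1-s}(P) ds`. -/
def CVaR (β : ℝ) (P : Measure ℝ) : ℝ := β⁻¹ * ∫ s in Ioc (0:ℝ) β, VaR P s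



lemma survival_nonneg (P : Measure ℝ) (x : ℝ) : 0 ≤ survival P x := ENNReal.toReal_nonneg

lemma survival_antitone (P : Measure ℝ) [IsFiniteMeasure P] : Antitone (survival P) := by
  intro a b hab
  exact ENNReal.toReal_mono (measure_ne_top _ _) (measure_mono (Ioi_subset_Ioi hab))

lemma survival_le_one (P : Measure ℝ) [IsProbabilityMeasure P] (x : ℝ) : survival P x ≤ 1 := by
  rw [survival, ← ENNReal.toReal_one]
  exact ENNReal.toReal_mono (by simp) (prob_le_one)

lemma ofReal_survival (P : Measure ℝ) [IsFiniteMeasure P] (x : ℝ) :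
    ENNReal.ofReal (survival P x) = P (Ioi x) :=
  ENNReal.ofReal_toReal (measure_ne_top _ _)

lemma survival_measurable (P : Measure ℝ) [IsFiniteMeasure P] : Measurable (survival P) :=
  (survival_antitone P).measurable

lemma survival_tendsto_atTop (P : Measure ℝ) [IsFiniteMeasure P] :
    Tendsto (survival P) atTop (𝓝 0) := by
  have h0 : Tendsto (fun n : ℕ => P (Ioi (n : ℝ))) atTop (𝓝 (P (⋂ n : ℕ, Ioi (n : ℝ)))) := by
    refine tendsto_measure_iInter_atTop (fun n => measurableSet_Ioi.nullMeasurableSet)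
      (fun a b hab => Ioi_subset_Ioi (by exact_mod_cast hab)) ⟨0, measure_ne_top _ _⟩
  have hempty : (⋂ n : ℕ, Ioi (n : ℝ)) = ∅ := by
    ext x
    simp only [mem_iInter, mem_Ioi, mem_empty_iff_false, iff_false, not_forall, not_lt]
    obtain ⟨n, hn⟩ := exists_nat_gt x
    exact ⟨n, hn.le⟩
  rw [hempty, measure_empty] at h0
  have h1 : Tendsto (fun n : ℕ => survival P n) atTop (𝓝 0) := by
    have := (ENNReal.tendsto_toReal (by simp)).comp h0
    simpa [survival, Function.comp_def] using this
  rw [Metric.tendsto_atTop] at h1 ⊢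
  intro ε hε
  obtain ⟨N, hN⟩ := h1 ε hε
  refine ⟨N, fun t ht => ?_⟩
  have h2 := hN N le_rfl
  have h3 : survival P t ≤ survival P N := survival_antitone P ht
  rw [Real.dist_eq] at h2 ⊢
  have := survival_nonneg P t
  have := survival_nonneg P (N : ℝ)
  rw [abs_of_nonneg (by linarith)] at h2 ⊢
  linarith

lemma survival_tendsto_atBot (P : Measure ℝ) [IsProbabilityMeasure P] :
    Tendsto (survival P) atBot (𝓝 1) := by
  have h0 : Tendsto (fun n : ℕ => P (Ioi (-(n : ℝ)))) atTop (𝓝 (P (⋃ n : ℕ, Ioi (-(n : ℝ))))) := by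
    refine tendsto_measure_iUnion_atTop (fun a b hab => Ioi_subset_Ioi (by
      simp only [neg_le_neg_iff]; exact_mod_cast hab))
  have huniv : (⋃ n : ℕ, Ioi (-(n : ℝ))) = univ := by
    ext x
    simp only [mem_iUnion, mem_Ioi, mem_univ, iff_true]
    obtain ⟨n, hn⟩ := exists_nat_gt (-x)
    exact ⟨n, by linarith⟩
  rw [huniv, measure_univ] at h0
  have h1 : Tendsto (fun n : ℕ => survival P (-(n:ℝ))) atTop (𝓝 1) := by
    have := (ENNReal.tendsto_toReal (by simp)).comp h0
    simpa [survival, Function.comp_def] using this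
  rw [Metric.tendsto_atTop] at h1
  refine Metric.tendsto_nhds.mpr fun ε hε => ?_
  rw [eventually_atBot]
  obtain ⟨N, hN⟩ := h1 ε hε
  refine ⟨-(N : ℝ), fun t ht => ?_⟩
  have h2 := hN N le_rfl
  have h3 : survival P (-(N:ℝ)) ≤ survival P t := survival_antitone P ht
  have h4 := survival_le_one P t
  have h5 := survival_le_one P (-(N:ℝ))
  rw [Real.dist_eq] at h2 ⊢
  rw [abs_of_nonpos (by linarith)] at h2 ⊢
  linarith

lemma survival_le_of_forall_gt (P : Measure ℝ) [IsFiniteMeasure P] (t s : ℝ)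
    (h : ∀ x, t < x → survival P x ≤ s) : survival P t ≤ s := by
  have h0 : Tendsto (fun n : ℕ => P (Ioi (t + 1/(n+1)))) atTop
      (𝓝 (P (⋃ n : ℕ, Ioi (t + 1/(n+1))))) := by
    refine tendsto_measure_iUnion_atTop (fun a b hab => Ioi_subset_Ioi ?_)
    have : (1:ℝ)/(b+1) ≤ 1/(a+1) := by
      apply one_div_le_one_div_of_le (by positivity)
      exact_mod_cast add_le_add_left (Nat.cast_le.mpr hab) 1
    linarith
  have huniv : (⋃ n : ℕ, Ioi (t + 1/((n:ℝ)+1))) = Ioi t := by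
    ext x
    simp only [mem_iUnion, mem_Ioi]
    constructor
    · rintro ⟨n, hn⟩
      have : (0:ℝ) < 1/((n:ℝ)+1) := by positivity
      linarith
    · intro hx
      obtain ⟨n, hn⟩ := exists_nat_one_div_lt (show (0:ℝ) < x - t by linarith)
      exact ⟨n, by linarith⟩
  rw [huniv] at h0
  have h1 : Tendsto (fun n : ℕ => survival P (t + 1/((n:ℝ)+1))) atTop (𝓝 (survival P t)) := by
    have := (ENNReal.tendsto_toReal (measure_ne_top P _)).comp h0
    simpa [survival, Function.comp_def] using this
  exact le_of_tendsto h1 (Eventually.of_forall fun n =>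
    h _ (lt_add_of_pos_right t (by positivity)))
lemma phi_monoOn {φ : ℝ → ℝ} (hφ : PhiSmooth φ) : MonotoneOn φ (Ici 1) := by
  rintro a (ha : 1 ≤ a) b (hb : 1 ≤ b) hab
  rcases eq_or_lt_of_le hab with rfl | hlt
  · exact le_rfl
  have hb1 : 1 < b := lt_of_le_of_lt ha hlt
  set t : ℝ := (b - a) / (b - 1) with ht
  have ht0 : 0 ≤ t := by apply div_nonneg <;> linarith
  have ht1 : t ≤ 1 := by rw [div_le_one (by linarith)]; linarith
  have key := hφ.convex.2 (mem_Ici.mpr (by norm_num : (0:ℝ) ≤ 1))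
    (mem_Ici.mpr (by linarith : (0:ℝ) ≤ b)) ht0 (by linarith : 0 ≤ 1 - t) (by ring)
  have hne : b - 1 ≠ 0 := by linarith
  have harg : t • (1:ℝ) + (1 - t) • b = a := by
    simp only [smul_eq_mul, ht]
    field_simp
    ring
  rw [harg, hφ.at_one, smul_eq_mul, smul_eq_mul, mul_zero, zero_add] at key
  have hφb : 0 ≤ φ b := hφ.nonneg b (by linarith)
  nlinarith

lemma phi_antiOn {φ : ℝ → ℝ} (hφ : PhiSmooth φ) : AntitoneOn φ (Icc 0 1) := by
  rintro a ⟨ha0, ha1⟩ b ⟨hb0, hb1⟩ hab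
  rcases eq_or_lt_of_le hab with rfl | hlt
  · exact le_rfl
  have ha1' : a < 1 := lt_of_lt_of_le hlt hb1
  set t : ℝ := (1 - b) / (1 - a) with ht
  have ht0 : 0 ≤ t := by apply div_nonneg <;> linarith
  have ht1 : t ≤ 1 := by rw [div_le_one (by linarith)]; linarith
  have key := hφ.convex.2 (mem_Ici.mpr ha0) (mem_Ici.mpr (by norm_num : (0:ℝ) ≤ 1))
    ht0 (by linarith : 0 ≤ 1 - t) (by ring)
  have hne : 1 - a ≠ 0 := by linarith
  have harg : t • a + (1 - t) • (1:ℝ) = b := by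
    simp only [smul_eq_mul, ht]
    field_simp
    ring
  rw [harg, hφ.at_one, smul_eq_mul, smul_eq_mul, mul_zero, add_zero] at key
  have hφa : 0 ≤ φ a := hφ.nonneg a ha0
  nlinarith

lemma phi_bound {φ : ℝ → ℝ} (hφ : PhiSmooth φ) {b v : ℝ} (hb : 1 ≤ b) (hv0 : 0 ≤ v)
    (hvb : v ≤ b) : φ v ≤ φ 0 + φ b := by
  rcases le_total v 1 with hv1 | hv1
  · have h1 := phi_antiOn hφ (show (0:ℝ) ∈ Icc (0:ℝ) 1 by norm_num) ⟨hv0, hv1⟩ hv0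
    have h2 := hφ.nonneg b (by linarith)
    linarith
  · have h1 := phi_monoOn hφ (mem_Ici.mpr hv1) (mem_Ici.mpr hb) hvb
    have h2 := hφ.nonneg 0 le_rfl
    linarith

lemma phi_potter {φ : ℝ → ℝ} {p : ℝ} (hφ : PhiSmooth φ) (hRV : RegVary φ p) {q : ℝ}
    (hpq : p < q) (hq : 0 ≤ q) :
    ∃ Y : ℝ, 1 ≤ Y ∧ ∃ C : ℝ, 0 < C ∧ ∀ y, Y ≤ y → φ y ≤ C * y ^ q := by
  -- eventually φ x ≥ x
  have hev1 : ∀ᶠ x : ℝ in atTop, x ≤ φ x := by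
    have := hφ.superlinear.eventually_ge_atTop 1
    filter_upwards [this, eventually_gt_atTop 0] with x hx hx0
    rw [le_div_iff₀ hx0] at hx
    linarith
  -- eventual doubling
  have h2p : (2:ℝ) ^ p < 2 ^ q := Real.rpow_lt_rpow_of_exponent_lt one_lt_two hpq
  have hev2 : ∀ᶠ t : ℝ in atTop, φ (t * 2) / φ t < 2 ^ q :=
    (hRV 2 two_pos).eventually_lt_const h2p
  obtain ⟨Y₀, hY₀⟩ := (hev1.and hev2).exists_forall_of_atTop
  set Y : ℝ := max Y₀ 1 with hYdef
  have hY1 : (1:ℝ) ≤ Y := le_max_right _ _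
  have hself : ∀ y, Y ≤ y → y ≤ φ y := fun y hy => (hY₀ y ((le_max_left _ _).trans hy)).1
  have hdbl : ∀ y, Y ≤ y → φ (2 * y) ≤ 2 ^ q * φ y := by
    intro y hy
    have h1 := (hY₀ y ((le_max_left _ _).trans hy)).2
    have hy0 : (0:ℝ) < y := lt_of_lt_of_le one_pos (hY1.trans hy)
    have hφy : 0 < φ y := lt_of_lt_of_le hy0 (hself y hy)
    rw [div_lt_iff₀ hφy] at h1
    calc φ (2 * y) = φ (y * 2) := by ring_nf
    _ ≤ 2 ^ q * φ y := h1.le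
  have hφY : 0 < φ Y := lt_of_lt_of_le (lt_of_lt_of_le one_pos hY1) (hself Y le_rfl)
  have hYpos : (0:ℝ) < Y := lt_of_lt_of_le one_pos hY1
  -- dyadic bound
  have hdyadic : ∀ n : ℕ, φ (Y * 2 ^ n) ≤ 2 ^ (q * n) * φ Y := by
    intro n
    induction n with
    | zero => simp
    | succ n ih =>
      have hYn : Y ≤ Y * 2 ^ n := le_mul_of_one_le_right hYpos.le (one_le_pow₀ one_le_two)
      have h1 : φ (Y * 2 ^ (n+1)) = φ (2 * (Y * 2 ^ n)) := by ring_nf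
      have h2 := hdbl (Y * 2 ^ n) hYn
      have h3 : (2:ℝ) ^ q * (2 ^ (q * n) * φ Y) = 2 ^ (q * (n+1)) * φ Y := by
        rw [← mul_assoc, ← Real.rpow_add two_pos]
        ring_nf
      calc φ (Y * 2 ^ (n+1)) = φ (2 * (Y * 2 ^ n)) := h1
      _ ≤ 2 ^ q * φ (Y * 2 ^ n) := h2
      _ ≤ 2 ^ q * (2 ^ (q * n) * φ Y) := by
          have h2q : (0:ℝ) < 2 ^ q := Real.rpow_pos_of_pos two_pos q
          nlinarith
      _ = 2 ^ (q * (n+1)) * φ Y := h3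
      _ = 2 ^ (q * ((n:ℕ)+1:ℕ)) * φ Y := by push_cast; ring_nf
  refine ⟨Y, hY1, (2 / Y) ^ q * φ Y, by positivity, fun y hy => ?_⟩
  have hy1 : (1:ℝ) ≤ y := hY1.trans hy
  have hy0 : (0:ℝ) < y := lt_of_lt_of_le one_pos hy1
  have hr1 : (1:ℝ) ≤ y / Y := (one_le_div hYpos).mpr hy
  set n : ℕ := ⌊Real.logb 2 (y / Y)⌋₊ with hn
  have hlogb0 : 0 ≤ Real.logb 2 (y / Y) := Real.logb_nonneg one_lt_two hr1
  have hup : y / Y < 2 ^ ((n:ℝ) + 1) := by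
    have h1 : Real.logb 2 (y / Y) < (n:ℝ) + 1 := by
      have := Nat.lt_floor_add_one (Real.logb 2 (y / Y))
      push_cast at this ⊢
      exact this
    calc y / Y = 2 ^ Real.logb 2 (y / Y) :=
          (Real.rpow_logb two_pos (by norm_num) (by linarith)).symm
    _ < 2 ^ ((n:ℝ) + 1) := Real.rpow_lt_rpow_of_exponent_lt one_lt_two h1
  have hlow : (2:ℝ) ^ (n:ℝ) ≤ y / Y := by
    calc (2:ℝ) ^ (n:ℝ) ≤ 2 ^ Real.logb 2 (y / Y) :=
          Real.rpow_le_rpow_of_exponent_le one_le_two (Nat.floor_le hlogb0)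
    _ = y / Y := Real.rpow_logb two_pos (by norm_num) (by linarith)
  -- φ y ≤ φ (Y * 2^(n+1)) ≤ 2^(q(n+1)) φ Y
  have hys : y ≤ Y * 2 ^ (n + 1 : ℕ) := by
    have : ((2:ℝ) ^ ((n:ℝ) + 1)) = 2 ^ (n + 1 : ℕ) := by
      rw [← Real.rpow_natCast 2 (n+1)]
      norm_num
    rw [div_lt_iff₀ hYpos] at hup
    have h' : y < Y * 2 ^ (n+1 : ℕ) := by
      calc y < 2 ^ ((n:ℝ)+1) * Y := hup
      _ = Y * 2 ^ (n+1 : ℕ) := by rw [this]; ring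
    exact h'.le
  have h1 : φ y ≤ φ (Y * 2 ^ (n + 1 : ℕ)) :=
    phi_monoOn hφ (mem_Ici.mpr hy1) (mem_Ici.mpr (hy1.trans hys)) hys
  have h2 := hdyadic (n + 1)
  -- 2^(q*(n+1)) = (2^(n+1))^q ≤ (2 * (y/Y))^q
  have h3 : (2:ℝ) ^ (q * ((n:ℕ) + 1 : ℕ)) ≤ (2 * (y / Y)) ^ q := by
    have hb : (2:ℝ) ^ ((n + 1 : ℕ) : ℝ) ≤ 2 * (y / Y) := by
      push_cast
      rw [Real.rpow_add two_pos, Real.rpow_one]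
      nlinarith [Real.rpow_pos_of_pos two_pos (n:ℝ)]
    calc (2:ℝ) ^ (q * ((n:ℕ) + 1 : ℕ)) = ((2:ℝ) ^ (((n:ℕ) + 1 : ℕ):ℝ)) ^ q := by
          rw [← Real.rpow_mul (by norm_num)]
          ring_nf
    _ ≤ (2 * (y / Y)) ^ q := by
          apply Real.rpow_le_rpow (by positivity) hb hq
  have h4 : (2 * (y / Y)) ^ q = (2 / Y) ^ q * y ^ q := by
    rw [← Real.mul_rpow (by positivity) (by positivity)]
    ring_nf
  have h5 : (0:ℝ) < 2 ^ (q * ((n:ℕ) + 1 : ℕ)) := Real.rpow_pos_of_pos two_pos _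
  calc φ y ≤ φ (Y * 2 ^ (n + 1 : ℕ)) := h1
  _ ≤ 2 ^ (q * (n + 1 : ℕ)) * φ Y := h2
  _ ≤ (2 / Y) ^ q * y ^ q * φ Y := by nlinarith [Real.rpow_pos_of_pos hy0 q]
  _ = (2 / Y) ^ q * φ Y * y ^ q := by ring

def qtl (S : ℝ → ℝ) (s : ℝ) : ℝ := if 0 < s ∧ s < 1 then sInf {x | S x ≤ s} else 0

section qtl
variable {S : ℝ → ℝ}

lemma qtl_lt_iff (hanti : Antitone S)
    (hrc : ∀ t s, (∀ x, t < x → S x ≤ s) → S t ≤ s)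
    (hne : ∀ s, 0 < s → ∃ x, S x ≤ s)
    (hbdd : ∀ s, s < 1 → ∃ x₀, ∀ x, x ≤ x₀ → s < S x) :
    ∀ s, 0 < s → s < 1 → ∀ t, (t < qtl S s ↔ s < S t) := by
  intro s hs0 hs1 t
  rw [qtl, if_pos ⟨hs0, hs1⟩]
  have hnonempty : {x | S x ≤ s}.Nonempty := hne s hs0
  have hbddBelow : BddBelow {x | S x ≤ s} := by
    obtain ⟨x₀, hx₀⟩ := hbdd s hs1
    refine ⟨x₀, fun y hy => ?_⟩
    by_contra hxy
    exact absurd hy (not_le.mpr (hx₀ y (le_of_not_ge hxy)))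
  constructor
  · intro ht
    by_contra hc
    push_neg at hc
    exact absurd (csInf_le hbddBelow (mem_setOf.mpr hc)) (not_le.mpr ht)
  · intro hst
    by_contra hc
    push_neg at hc
    have hall : ∀ x, t < x → S x ≤ s := by
      intro x hx
      obtain ⟨y, hy, hyx⟩ := exists_lt_of_csInf_lt hnonempty (lt_of_le_of_lt hc hx)
      exact le_trans (hanti hyx.le) hy
    exact absurd (hrc t s hall) (not_le.mpr hst)

lemma qtl_measurable (hanti : Antitone S)
    (hrc : ∀ t s, (∀ x, t < x → S x ≤ s) → S t ≤ s)
    (hne : ∀ s, 0 < s → ∃ x, S x ≤ s)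
    (hbdd : ∀ s, s < 1 → ∃ x₀, ∀ x, x ≤ x₀ → s < S x) :
    Measurable (qtl S) := by
  apply measurable_of_Ioi
  intro t
  have : qtl S ⁻¹' (Ioi t) =
      (Ioo (0:ℝ) 1 ∩ Iio (S t)) ∪ (if 0 > t then (Ioo (0:ℝ) 1)ᶜ else ∅) := by
    ext s
    by_cases hs : 0 < s ∧ s < 1
    · simp only [mem_preimage, mem_Ioi, mem_union, mem_inter_iff, mem_Ioo, mem_Iio]
      rw [qtl_lt_iff hanti hrc hne hbdd s hs.1 hs.2 t]
      constructor
      · intro h; exact Or.inl ⟨⟨hs.1, hs.2⟩, h⟩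
      · rintro (⟨_, h⟩ | h)
        · exact h
        · split_ifs at h with hif
          · exact absurd (mem_Ioo.mpr hs) h
          · exact absurd h (notMem_empty s)
    · simp only [mem_preimage, mem_Ioi, qtl, if_neg hs, mem_union, mem_inter_iff, mem_Ioo,
        mem_Iio]
      constructor
      · intro h
        right
        rw [if_pos h]
        exact fun hm => hs (mem_Ioo.mp hm)
      · rintro (⟨h1, _⟩ | h)
        · exact absurd h1 hs
        · split_ifs at h with hif
          · exact hif
          · exact absurd h (notMem_empty s)
  rw [this]
  apply MeasurableSet.union
  · exact measurableSet_Ioo.inter measurableSet_Iio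
  · split_ifs
    · exact measurableSet_Ioo.compl
    · exact MeasurableSet.empty

end qtl

set_option maxHeartbeats 2000000 in
/-- for `φ ∈ RV(p)`, `p > 1`, and heavy-tailed `P₀` with index `γ`, the
φ-divergence ball contains, for every `γ' ∈ ((p-1)γ/p, γ)`, a distribution whose
survival function is regularly varying with index `-γ'`. -/
theorem phiBall_contains_heavier_power_tail
    (φ : ℝ → ℝ) (δ p γ : ℝ) (hδ : 0 < δ) (hφ : PhiSmooth φ)
    (hp : 1 < p) (hRV : RegVary φ p)
    (P₀ : Measure ℝ) [IsProbabilityMeasure P₀]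
    (hγ : 0 < γ) (hP : HeavyTailed P₀ γ) :
    ∀ γ' ∈ Ioo ((p - 1) * γ / p) γ,
      ∃ P₁ ∈ phiBall φ δ P₀, RegVary (survival P₁) (-γ') := by
  intro γ' hγ'
  obtain ⟨hγ'l, hγ'u⟩ := hγ'
  have hp0 : (0:ℝ) < p := by linarith
  have hγ'0 : 0 < γ' := lt_of_le_of_lt (div_nonneg (mul_nonneg (by linarith) hγ.le) hp0.le) hγ'l
  set S : ℝ → ℝ := survival P₀ with hSdef
  set θ : ℝ := γ' / γ with hθdef
  have hθ0 : 0 < θ := div_pos hγ'0 hγ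
  have hθ1 : θ < 1 := (div_lt_one hγ).mpr hγ'u
  have hpθ : p * (1 - θ) < 1 := by
    have h1 : (p - 1) * γ < γ' * p := by
      rw [div_lt_iff₀ hp0] at hγ'l
      linarith
    have h2 : p * (1 - θ) = p - p * (γ' / γ) := by ring
    rw [h2, sub_lt_iff_lt_add]
    have h3 : γ' / γ * γ = γ' := div_mul_cancel₀ _ hγ.ne'
    nlinarith [mul_pos hp0 (div_pos hγ'0 hγ)]
  -- basic facts about S
  have hSanti : Antitone S := survival_antitone P₀
  have hSnn : ∀ x, 0 ≤ S x := survival_nonneg P₀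
  have hSle1 : ∀ x, S x ≤ 1 := survival_le_one P₀
  have hS0 : Tendsto S atTop (𝓝 0) := survival_tendsto_atTop P₀
  have hS1 : Tendsto S atBot (𝓝 1) := survival_tendsto_atBot P₀
  have hrc : ∀ t s, (∀ x, t < x → S x ≤ s) → S t ≤ s := survival_le_of_forall_gt P₀
  have hSmeas : Measurable S := survival_measurable P₀
  -- positivity of S
  have hSpos : ∀ t, 0 < S t := by
    by_contra hc
    push_neg at hc
    obtain ⟨t₀, ht₀⟩ := hc
    have hzero : ∀ t, t₀ ≤ t → S t = 0 :=
      fun t ht => le_antisymm (le_trans (hSanti ht) ht₀) (hSnn t)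
    have h2 := hP 2 two_pos
    have hpos : (0:ℝ) < 2 ^ (-γ) := Real.rpow_pos_of_pos two_pos _
    have hev : ∀ᶠ t in atTop, 0 < S (t * 2) / S t := h2.eventually (eventually_gt_nhds hpos)
    obtain ⟨t, h1, h2'⟩ := (hev.and (eventually_ge_atTop t₀)).exists
    rw [hzero t h2', div_zero] at h1
    exact lt_irrefl 0 h1
  have hne : ∀ s, 0 < s → ∃ x, S x ≤ s := by
    intro s hs
    exact (hS0.eventually (eventually_le_nhds hs)).exists
  have hbdd : ∀ s, s < 1 → ∃ x₀, ∀ x, x ≤ x₀ → s < S x := by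
    intro s hs
    have h := hS1.eventually (eventually_gt_nhds hs)
    rw [eventually_atBot] at h
    exact h
  -- quantile function
  set qf : ℝ → ℝ := qtl S with hqfdef
  have hkey : ∀ s, 0 < s → s < 1 → ∀ t, (t < qf s ↔ s < S t) :=
    qtl_lt_iff hSanti hrc hne hbdd
  have hqmeas : Measurable qf := qtl_measurable hSanti hrc hne hbdd
  have hSq_le : ∀ s, 0 < s → s < 1 → S (qf s) ≤ s := by
    intro s hs0 hs1
    apply hrc
    intro x hx
    by_contra hcon
    push_neg at hcon
    exact absurd ((hkey s hs0 hs1 x).mpr hcon) (not_lt.mpr hx.le)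
  set μ01 : Measure ℝ := volume.restrict (Ioo (0:ℝ) 1) with hμ01def
  have hμ01univ : μ01 univ = 1 := by
    rw [hμ01def, Measure.restrict_apply_univ, Real.volume_Ioo]
    norm_num
  -- inverse transform sampling
  have hmap : Measure.map qf μ01 = P₀ := by
    haveI : IsFiniteMeasure (Measure.map qf μ01) := by
      constructor
      rw [Measure.map_apply hqmeas MeasurableSet.univ, preimage_univ, hμ01univ]
      exact ENNReal.one_lt_top
    refine Measure.ext_of_Iic _ _ (fun t => ?_)
    rw [Measure.map_apply hqmeas measurableSet_Iic, hμ01def,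
      Measure.restrict_apply (hqmeas measurableSet_Iic)]
    have hpre : qf ⁻¹' (Iic t) ∩ Ioo 0 1 = Ico (S t) 1 := by
      ext s
      simp only [mem_inter_iff, mem_preimage, mem_Iic, mem_Ioo, mem_Ico]
      constructor
      · rintro ⟨h1, h2, h3⟩
        refine ⟨not_lt.mp (fun hc => absurd ((hkey s h2 h3 t).mpr hc) (not_lt.mpr h1)), h3⟩
      · rintro ⟨h1, h2⟩
        have hs0 : 0 < s := lt_of_lt_of_le (hSpos t) h1
        exact ⟨not_lt.mp (fun hc => absurd ((hkey s hs0 h2 t).mp hc) (not_lt.mpr h1)), hs0, h2⟩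
    rw [hpre, Real.volume_Ico]
    have hIic : P₀ (Iic t) = 1 - ENNReal.ofReal (S t) := by
      rw [← compl_Ioi, measure_compl measurableSet_Ioi (measure_ne_top _ _), measure_univ,
        ofReal_survival P₀ t]
    rw [hIic, ← ENNReal.ofReal_one, ← ENNReal.ofReal_sub _ (hSnn t)]
  -- definition of Q
  set T : ℝ → ℝ := fun v => qf (v ^ θ⁻¹) with hTdef
  have hTmeas : Measurable T := hqmeas.comp (measurable_id.pow_const θ⁻¹)
  set Q : Measure ℝ := Measure.map T μ01 with hQdef
  haveI hμ01prob : IsProbabilityMeasure μ01 := ⟨hμ01univ⟩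
  haveI hQprob : IsProbabilityMeasure Q := Measure.isProbabilityMeasure_map hTmeas.aemeasurable
  have hQIoi : ∀ t, Q (Ioi t) = ENNReal.ofReal (S t ^ θ) := by
    intro t
    rw [hQdef, Measure.map_apply hTmeas measurableSet_Ioi, hμ01def,
      Measure.restrict_apply (hTmeas measurableSet_Ioi)]
    have hpre : T ⁻¹' (Ioi t) ∩ Ioo 0 1 = Ioo 0 (S t ^ θ) := by
      ext v
      simp only [hTdef, mem_inter_iff, mem_preimage, mem_Ioi, mem_Ioo]
      constructor
      · rintro ⟨h1, hv0, hv1⟩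
        have hv0' : 0 < v ^ θ⁻¹ := Real.rpow_pos_of_pos hv0 _
        have hv1' : v ^ θ⁻¹ < 1 := Real.rpow_lt_one hv0.le hv1 (by positivity)
        have h2 : v ^ θ⁻¹ < S t := (hkey _ hv0' hv1' t).mp h1
        refine ⟨hv0, ?_⟩
        have h3 : (v ^ θ⁻¹) ^ θ < S t ^ θ := Real.rpow_lt_rpow hv0'.le h2 hθ0
        rwa [← Real.rpow_mul hv0.le, inv_mul_cancel₀ hθ0.ne', Real.rpow_one] at h3
      · rintro ⟨hv0, hvlt⟩
        have hSt1 : S t ^ θ ≤ 1 := Real.rpow_le_one (hSnn t) (hSle1 t) hθ0.le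
        have hv1 : v < 1 := lt_of_lt_of_le hvlt hSt1
        have hv0' : 0 < v ^ θ⁻¹ := Real.rpow_pos_of_pos hv0 _
        have h2 : v ^ θ⁻¹ < (S t ^ θ) ^ θ⁻¹ := Real.rpow_lt_rpow hv0.le hvlt (by positivity)
        rw [← Real.rpow_mul (hSnn t), mul_inv_cancel₀ hθ0.ne', Real.rpow_one] at h2
        have hv1' : v ^ θ⁻¹ < 1 := lt_of_lt_of_le h2 (hSle1 t)
        exact ⟨(hkey _ hv0' hv1' t).mpr h2, hv0, hv1⟩
    rw [hpre, Real.volume_Ioo, sub_zero]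
  have hQsurv : ∀ t, survival Q t = S t ^ θ := by
    intro t
    rw [survival, hQIoi t, ENNReal.toReal_ofReal (Real.rpow_nonneg (hSnn t) θ)]
  -- change of variables
  have hCoV : ∀ F : ℝ → ℝ≥0∞, Measurable F →
      ∫⁻ v in Ioo (0:ℝ) 1, F (T v) =
        ∫⁻ s in Ioo (0:ℝ) 1, ENNReal.ofReal (θ * s ^ (θ - 1)) * F (qf s) := by
    intro F hF
    have himg : (fun s : ℝ => s ^ θ) '' Ioo 0 1 = Ioo 0 1 := by
      ext v
      simp only [mem_image, mem_Ioo]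
      constructor
      · rintro ⟨s, ⟨hs0, hs1⟩, rfl⟩
        exact ⟨Real.rpow_pos_of_pos hs0 _, Real.rpow_lt_one hs0.le hs1 hθ0⟩
      · rintro ⟨hv0, hv1⟩
        refine ⟨v ^ θ⁻¹, ⟨Real.rpow_pos_of_pos hv0 _,
          Real.rpow_lt_one hv0.le hv1 (by positivity)⟩, ?_⟩
        rw [← Real.rpow_mul hv0.le, inv_mul_cancel₀ hθ0.ne', Real.rpow_one]
    have hderiv : ∀ s ∈ Ioo (0:ℝ) 1,
        HasDerivWithinAt (fun s : ℝ => s ^ θ) (θ * s ^ (θ - 1)) (Ioo 0 1) s :=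
      fun s hs => (Real.hasDerivAt_rpow_const (Or.inl hs.1.ne')).hasDerivWithinAt
    have hinj : InjOn (fun s : ℝ => s ^ θ) (Ioo 0 1) := by
      intro a ha b hb hab
      rcases lt_trichotomy a b with h | h | h
      · exact absurd hab (ne_of_lt (Real.rpow_lt_rpow ha.1.le h hθ0))
      · exact h
      · exact absurd hab.symm (ne_of_lt (Real.rpow_lt_rpow hb.1.le h hθ0))
    have key := lintegral_image_eq_lintegral_abs_det_fderiv_mul volume measurableSet_Ioo
      (fun s hs => (hderiv s hs).hasFDerivWithinAt) hinj (fun v => F (T v))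
    simp only [ContinuousLinearMap.det_toSpanSingleton] at key
    rw [himg] at key
    rw [key]
    apply setLIntegral_congr_fun measurableSet_Ioo
    intro s hs
    have h1 : |θ * s ^ (θ - 1)| = θ * s ^ (θ - 1) := by
      apply abs_of_nonneg
      have := Real.rpow_nonneg hs.1.le (θ - 1)
      positivity
    have h2 : T (s ^ θ) = qf s := by
      rw [hTdef]
      simp only
      rw [← Real.rpow_mul hs.1.le, mul_inv_cancel₀ hθ0.ne', Real.rpow_one]
    beta_reduce
    rw [h1, h2]
  -- domination of Q
  set g : ℝ → ℝ≥0∞ := fun x => ENNReal.ofReal (θ * S x ^ (θ - 1)) with hgdef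
  have hgmeas : Measurable g := ((hSmeas.pow_const (θ - 1)).const_mul θ).ennreal_ofReal
  have hQle : ∀ A, MeasurableSet A → Q A ≤ ∫⁻ x in A, g x ∂P₀ := by
    intro A hA
    have hFmeas : Measurable (A.indicator (fun _ : ℝ => (1:ℝ≥0∞))) := measurable_one.indicator hA
    have h1 : Q A = ∫⁻ v in Ioo (0:ℝ) 1, A.indicator (fun _ => (1:ℝ≥0∞)) (T v) := by
      rw [hQdef, Measure.map_apply hTmeas hA, hμ01def, Measure.restrict_apply (hTmeas hA)]
      have heq : ∀ v, A.indicator (fun _ => (1:ℝ≥0∞)) (T v)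
          = (T ⁻¹' A).indicator (fun _ => (1:ℝ≥0∞)) v := by
        intro v
        by_cases hv : T v ∈ A
        · rw [indicator_of_mem hv, indicator_of_mem (mem_preimage.mpr hv)]
        · rw [indicator_of_notMem hv, indicator_of_notMem (fun hc => hv (mem_preimage.mp hc))]
      calc volume (T ⁻¹' A ∩ Ioo 0 1)
          = (volume.restrict (Ioo (0:ℝ) 1)) (T ⁻¹' A) :=
            (Measure.restrict_apply (hTmeas hA)).symm
        _ = ∫⁻ v in Ioo (0:ℝ) 1, (T ⁻¹' A).indicator (fun _ => 1) v := by
            rw [lintegral_indicator (hTmeas hA), setLIntegral_one]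
        _ = ∫⁻ v in Ioo (0:ℝ) 1, A.indicator (fun _ => 1) (T v) := by
            apply lintegral_congr
            intro v
            rw [heq]
    rw [h1, hCoV _ hFmeas]
    have h2 : ∫⁻ s in Ioo (0:ℝ) 1,
          ENNReal.ofReal (θ * s ^ (θ - 1)) * A.indicator (fun _ => 1) (qf s)
        ≤ ∫⁻ s in Ioo (0:ℝ) 1, g (qf s) * A.indicator (fun _ => 1) (qf s) := by
      apply setLIntegral_mono' measurableSet_Ioo
      intro s hs
      apply mul_le_mul_left
      apply ENNReal.ofReal_le_ofReal
      apply mul_le_mul_of_nonneg_left _ hθ0.le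
      exact Real.rpow_le_rpow_of_nonpos (hSpos (qf s)) (hSq_le s hs.1 hs.2) (by linarith)
    refine le_trans h2 ?_
    have h3 : ∫⁻ s in Ioo (0:ℝ) 1, g (qf s) * A.indicator (fun _ => 1) (qf s)
        = ∫⁻ x, g x * A.indicator (fun _ => 1) x ∂P₀ := by
      rw [← hmap, lintegral_map (f := fun x => g x * A.indicator (fun _ => 1) x) (hgmeas.mul hFmeas) hqmeas, hμ01def]
    rw [h3]
    apply le_of_eq
    rw [← lintegral_indicator hA]
    apply lintegral_congr
    intro x
    by_cases hx : x ∈ A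
    · rw [indicator_of_mem hx, indicator_of_mem hx, mul_one]
    · rw [indicator_of_notMem hx, indicator_of_notMem hx, mul_zero]
  have hQac : Q ≪ P₀ := by
    refine Measure.AbsolutelyContinuous.mk (fun A hA h0 => ?_)
    refine le_antisymm (le_trans (hQle A hA) ?_) zero_le
    rw [setLIntegral_measure_zero A g h0]
  have hrnle : Q.rnDeriv P₀ ≤ᵐ[P₀] g := by
    apply ae_le_of_forall_setLIntegral_le_of_sigmaFinite (Measure.measurable_rnDeriv Q P₀)
    intro A hA _
    exact le_trans (Measure.setLIntegral_rnDeriv_le A) (hQle A hA)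
  -- doubling constant from regular variation
  set K : ℝ := 2 ^ γ + 1 with hKdef
  have h2γpos : (0:ℝ) < 2 ^ γ := Real.rpow_pos_of_pos two_pos γ
  have hK1 : 1 ≤ K := by rw [hKdef]; linarith
  have hKpos : 0 < K := lt_of_lt_of_le one_pos hK1
  have hdou : ∃ T₁ : ℝ, 0 < T₁ ∧ ∀ t, T₁ ≤ t → S t ≤ K * S (t * 2) := by
    have h2 := hP 2 two_pos
    have hinv : Tendsto (fun t => S t / S (t * 2)) atTop (𝓝 (2 ^ γ)) := by
      have h3 := h2.inv₀ (ne_of_gt (Real.rpow_pos_of_pos two_pos (-γ)))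
      have h4 : ((2:ℝ) ^ (-γ))⁻¹ = 2 ^ γ := by
        rw [Real.rpow_neg two_pos.le, inv_inv]
      rw [h4] at h3
      refine h3.congr (fun t => ?_)
      rw [inv_div]
    have hev : ∀ᶠ t in atTop, S t / S (t * 2) < K :=
      hinv.eventually (eventually_lt_nhds (by rw [hKdef]; linarith))
    rw [eventually_atTop] at hev
    obtain ⟨T₀, hT₀⟩ := hev
    refine ⟨max T₀ 1, lt_of_lt_of_le one_pos (le_max_right _ _), fun t ht => ?_⟩
    have h5 := hT₀ t ((le_max_left _ _).trans ht)
    rw [div_lt_iff₀ (hSpos (t * 2))] at h5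
    nlinarith [hSpos (t * 2)]
  obtain ⟨T₁, hT₁pos, hT₁⟩ := hdou
  set M : ℝ := max (2 * T₁) 1 with hMdef
  have hM1 : (1:ℝ) ≤ M := le_max_right _ _
  have hSqK : ∀ s, 0 < s → s < 1 → M < qf s → s / K < S (qf s) := by
    intro s hs0 hs1 hMq
    have hq0 : 0 < qf s := lt_of_lt_of_le one_pos (hM1.trans hMq.le)
    have hy : qf s / 2 < qf s := by linarith
    have hSy : s < S (qf s / 2) := (hkey s hs0 hs1 _).mp hy
    have hT : T₁ ≤ qf s / 2 := by
      have h6 : 2 * T₁ ≤ M := le_max_left _ _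
      linarith
    have hdbl := hT₁ _ hT
    rw [div_mul_cancel₀ _ (two_ne_zero)] at hdbl
    rw [div_lt_iff₀ hKpos]
    calc s < S (qf s / 2) := hSy
    _ ≤ K * S (qf s) := hdbl
    _ = S (qf s) * K := mul_comm _ _
  -- Potter-type bound for φ
  set qh : ℝ := (p + 1 / (1 - θ)) / 2 with hqhdef
  have h1θ : 0 < 1 - θ := by linarith
  have hqh_gt : p < qh := by
    rw [hqhdef]
    have h7 : p < 1 / (1 - θ) := by rw [lt_div_iff₀ h1θ]; linarith
    linarith
  have hqh_pos : 0 < qh := lt_trans hp0 hqh_gt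
  set r : ℝ := (1 - θ) * qh with hrdef
  have hr_pos : 0 < r := mul_pos h1θ hqh_pos
  have hr_lt1 : r < 1 := by
    have h8 : (1 - θ) * (1 / (1 - θ)) = 1 := by
      field_simp
    have h9 : r = ((1 - θ) * p + (1 - θ) * (1 / (1 - θ))) / 2 := by
      rw [hrdef, hqhdef]; ring
    rw [h8] at h9
    have h10 : (1 - θ) * p < 1 := by nlinarith
    linarith [h9]
  obtain ⟨Y, hY1, C, hC, hpott⟩ := phi_potter hφ hRV hqh_gt hqh_pos.le
  set C₄ : ℝ := max (1 + θ * K ^ (1 - θ)) 1 with hC₄def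
  have hC₄1 : (1:ℝ) ≤ C₄ := le_max_right _ _
  set C₃ : ℝ := C * (Y * C₄) ^ qh with hC₃def
  have htail : ∀ s, 0 < s → s < 1 → φ (1 + θ * (s / K) ^ (θ - 1)) ≤ C₃ * s ^ (-r) := by
    intro s hs0 hs1
    have hsθ1 : 1 ≤ s ^ (θ - 1) :=
      Real.one_le_rpow_of_pos_of_le_one_of_nonpos hs0 hs1.le (by linarith)
    have hsθpos : 0 < s ^ (θ - 1) := Real.rpow_pos_of_pos hs0 _
    have hK1θ : 0 < K ^ (1 - θ) := Real.rpow_pos_of_pos hKpos _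
    have ha : (s / K) ^ (θ - 1) = s ^ (θ - 1) * K ^ (1 - θ) := by
      rw [Real.div_rpow hs0.le hKpos.le, div_eq_mul_inv, ← Real.rpow_neg hKpos.le]
      ring_nf
    have harg : 1 + θ * (s / K) ^ (θ - 1) ≤ C₄ * s ^ (θ - 1) := by
      rw [ha]
      have h9 : 1 + θ * (s ^ (θ - 1) * K ^ (1 - θ)) ≤ (1 + θ * K ^ (1 - θ)) * s ^ (θ - 1) := by
        nlinarith
      refine le_trans h9 (mul_le_mul_of_nonneg_right (le_max_left _ _) hsθpos.le)
    have harg1 : (1:ℝ) ≤ 1 + θ * (s / K) ^ (θ - 1) := by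
      have h10 : 0 ≤ (s / K) ^ (θ - 1) := Real.rpow_nonneg (by positivity) _
      nlinarith
    have hYC : 1 + θ * (s / K) ^ (θ - 1) ≤ Y * C₄ * s ^ (θ - 1) := by
      have h11 : C₄ * s ^ (θ - 1) ≤ Y * C₄ * s ^ (θ - 1) := by
        have hC₄pos : (0:ℝ) < C₄ := lt_of_lt_of_le one_pos hC₄1
        nlinarith
      linarith [harg]
    have hge : Y ≤ Y * C₄ * s ^ (θ - 1) := by nlinarith
    calc φ (1 + θ * (s / K) ^ (θ - 1))
        ≤ φ (Y * C₄ * s ^ (θ - 1)) := phi_monoOn hφ (mem_Ici.mpr harg1)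
          (mem_Ici.mpr (le_trans harg1 hYC)) hYC
      _ ≤ C * (Y * C₄ * s ^ (θ - 1)) ^ qh := hpott _ hge
      _ = C₃ * s ^ (-r) := by
          rw [hC₃def, Real.mul_rpow (by positivity) hsθpos.le, ← Real.rpow_mul hs0.le]
          have h12 : (θ - 1) * qh = -r := by rw [hrdef]; ring
          rw [h12, mul_assoc]
  -- the dominating function and its integrability
  have hφcont : Continuous φ := hφ.diff1.continuous
  have hinner_meas : Measurable fun x => φ (1 + θ * S x ^ (θ - 1)) :=
    hφcont.measurable.comp (((hSmeas.pow_const (θ - 1)).const_mul θ).const_add 1)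
  set B : ℝ → ℝ≥0∞ := fun x => ENNReal.ofReal (φ (1 + θ * S x ^ (θ - 1))) with hBdef
  have hBmeas : Measurable B := hinner_meas.ennreal_ofReal
  set Dbound : ℝ → ℝ≥0∞ := fun x => ENNReal.ofReal (φ 0) + B x with hDdef
  have hφ0 : 0 ≤ φ 0 := hφ.nonneg 0 le_rfl
  have hargome : ∀ x : ℝ, (1:ℝ) ≤ 1 + θ * S x ^ (θ - 1) := by
    intro x
    have := Real.rpow_nonneg (hSnn x) (θ - 1)
    nlinarith
  have hBfin : ∫⁻ x, B x ∂P₀ < ⊤ := by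
    rw [← lintegral_add_compl B (measurableSet_Iic (a := M))]
    have hpart1 : ∫⁻ x in Iic M, B x ∂P₀ < ⊤ := by
      have hconst : ∀ x ∈ Iic M, B x ≤ ENNReal.ofReal (φ (1 + θ * S M ^ (θ - 1))) := by
        intro x hx
        apply ENNReal.ofReal_le_ofReal
        have h1 : S M ≤ S x := hSanti hx
        have h2 : S x ^ (θ - 1) ≤ S M ^ (θ - 1) :=
          Real.rpow_le_rpow_of_nonpos (hSpos M) h1 (by linarith)
        have h3 : 1 + θ * S x ^ (θ - 1) ≤ 1 + θ * S M ^ (θ - 1) := by nlinarith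
        exact phi_monoOn hφ (mem_Ici.mpr (hargome x)) (mem_Ici.mpr ((hargome x).trans h3)) h3
      calc ∫⁻ x in Iic M, B x ∂P₀
          ≤ ∫⁻ _ in Iic M, ENNReal.ofReal (φ (1 + θ * S M ^ (θ - 1))) ∂P₀ :=
            setLIntegral_mono' measurableSet_Iic hconst
        _ = ENNReal.ofReal (φ (1 + θ * S M ^ (θ - 1))) * P₀ (Iic M) := setLIntegral_const _ _
        _ < ⊤ := ENNReal.mul_lt_top ENNReal.ofReal_lt_top (measure_lt_top _ _)
    have hpart2 : ∫⁻ x in (Iic M)ᶜ, B x ∂P₀ < ⊤ := by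
      rw [compl_Iic]
      have hrw : ∫⁻ x in Ioi M, B x ∂P₀ = ∫⁻ s, (Ioi M).indicator B (qf s) ∂μ01 := by
        rw [← lintegral_indicator measurableSet_Ioi, ← hmap,
          lintegral_map (hBmeas.indicator measurableSet_Ioi) hqmeas]
      rw [hrw, hμ01def]
      have hb : ∀ s ∈ Ioo (0:ℝ) 1,
          (Ioi M).indicator B (qf s) ≤ ENNReal.ofReal (C₃ * s ^ (-r)) := by
        intro s hs
        by_cases hq : qf s ∈ Ioi M
        · rw [indicator_of_mem hq]
          have h1 : s / K < S (qf s) := hSqK s hs.1 hs.2 (mem_Ioi.mp hq)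
          have h2 : S (qf s) ^ (θ - 1) ≤ (s / K) ^ (θ - 1) :=
            Real.rpow_le_rpow_of_nonpos (div_pos hs.1 hKpos) h1.le (by linarith)
          have h3 : 1 + θ * S (qf s) ^ (θ - 1) ≤ 1 + θ * (s / K) ^ (θ - 1) := by nlinarith
          apply ENNReal.ofReal_le_ofReal
          calc φ (1 + θ * S (qf s) ^ (θ - 1)) ≤ φ (1 + θ * (s / K) ^ (θ - 1)) :=
              phi_monoOn hφ (mem_Ici.mpr (hargome _)) (mem_Ici.mpr ((hargome _).trans h3)) h3
            _ ≤ C₃ * s ^ (-r) := htail s hs.1 hs.2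
        · rw [indicator_of_notMem hq]
          exact zero_le
      refine lt_of_le_of_lt (setLIntegral_mono' measurableSet_Ioo hb) ?_
      have hint : IntegrableOn (fun s : ℝ => s ^ (-r)) (Ioc (0:ℝ) 1) volume := by
        have h := intervalIntegral.intervalIntegrable_rpow'
          (a := 0) (b := 1) (r := -r) (by linarith)
        rwa [intervalIntegrable_iff, uIoc_of_le zero_le_one] at h
      have hC₃0 : 0 ≤ C₃ := by
        rw [hC₃def]
        exact mul_nonneg hC.le (Real.rpow_nonneg (by nlinarith) _)
      have hfin2 : ∫⁻ s in Ioc (0:ℝ) 1, ENNReal.ofReal (s ^ (-r)) < ⊤ := by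
        have hae : 0 ≤ᵐ[volume.restrict (Ioc (0:ℝ) 1)] fun s : ℝ => s ^ (-r) := by
          filter_upwards [ae_restrict_mem measurableSet_Ioc] with s hs
          exact Real.rpow_nonneg hs.1.le _
        exact (hasFiniteIntegral_iff_ofReal hae).mp hint.2
      calc ∫⁻ s in Ioo (0:ℝ) 1, ENNReal.ofReal (C₃ * s ^ (-r))
          ≤ ∫⁻ s in Ioc (0:ℝ) 1, ENNReal.ofReal (C₃ * s ^ (-r)) :=
            lintegral_mono_set Ioo_subset_Ioc_self
        _ = ENNReal.ofReal C₃ * ∫⁻ s in Ioc (0:ℝ) 1, ENNReal.ofReal (s ^ (-r)) := by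
            rw [← lintegral_const_mul _ ((measurable_id'.pow_const (-r)).ennreal_ofReal)]
            apply lintegral_congr
            intro s
            rw [← ENNReal.ofReal_mul hC₃0]
        _ < ⊤ := ENNReal.mul_lt_top ENNReal.ofReal_lt_top hfin2
    exact ENNReal.add_lt_top.mpr ⟨hpart1, hpart2⟩
  have hDfin : ∫⁻ x, Dbound x ∂P₀ ≠ ⊤ := by
    have heq : ∫⁻ x, Dbound x ∂P₀
        = ENNReal.ofReal (φ 0) * P₀ univ + ∫⁻ x, B x ∂P₀ := by
      rw [hDdef, lintegral_add_left measurable_const, lintegral_const]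
    rw [heq]
    exact (ENNReal.add_lt_top.mpr ⟨ENNReal.mul_lt_top ENNReal.ofReal_lt_top (measure_lt_top _ _),
      hBfin⟩).ne
  -- dominated convergence
  set h : ℝ → ℝ≥0∞ := Q.rnDeriv P₀ with hhdef
  have hhmeas : Measurable h := Measure.measurable_rnDeriv Q P₀
  have hhfin : ∀ᵐ x ∂P₀, h x < ⊤ := Measure.rnDeriv_lt_top Q P₀
  set F : ℕ → ℝ → ℝ≥0∞ := fun n x =>
    ENNReal.ofReal (φ (1 - 1 / ((n:ℝ) + 1) + 1 / ((n:ℝ) + 1) * (h x).toReal)) with hFdef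
  have hFmeas : ∀ n, Measurable (F n) := by
    intro n
    apply Measurable.ennreal_ofReal
    apply hφcont.measurable.comp
    exact (hhmeas.ennreal_toReal.const_mul _).const_add _
  have hεn : ∀ n : ℕ, 0 < 1 / ((n:ℝ) + 1) ∧ 1 / ((n:ℝ) + 1) ≤ 1 := by
    intro n
    constructor
    · positivity
    · rw [div_le_one (by positivity)]
      linarith [Nat.cast_nonneg (α := ℝ) n]
  have hFle : ∀ n, F n ≤ᵐ[P₀] Dbound := by
    intro n
    filter_upwards [hrnle, hhfin] with x hx1 hx2
    obtain ⟨hen0, hen1⟩ := hεn n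
    have hc0 : 0 ≤ (h x).toReal := ENNReal.toReal_nonneg
    have hgr : 0 ≤ θ * S x ^ (θ - 1) := mul_nonneg hθ0.le (Real.rpow_nonneg (hSnn x) _)
    have hcle : (h x).toReal ≤ θ * S x ^ (θ - 1) := by
      have h1 := ENNReal.toReal_mono ENNReal.ofReal_ne_top hx1
      rwa [ENNReal.toReal_ofReal hgr] at h1
    have hv0 : 0 ≤ 1 - 1 / ((n:ℝ) + 1) + 1 / ((n:ℝ) + 1) * (h x).toReal := by nlinarith
    have hvb : 1 - 1 / ((n:ℝ) + 1) + 1 / ((n:ℝ) + 1) * (h x).toReal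
        ≤ 1 + θ * S x ^ (θ - 1) := by nlinarith
    have hb1 : (1:ℝ) ≤ 1 + θ * S x ^ (θ - 1) := hargome x
    have hbnd := phi_bound hφ hb1 hv0 hvb
    calc F n x ≤ ENNReal.ofReal (φ 0 + φ (1 + θ * S x ^ (θ - 1))) :=
          ENNReal.ofReal_le_ofReal hbnd
      _ ≤ Dbound x := ENNReal.ofReal_add_le
  have hFlim : ∀ᵐ x ∂P₀, Tendsto (fun n => F n x) atTop (𝓝 0) := by
    filter_upwards [hhfin] with x hx
    have h1 : Tendsto (fun n : ℕ => (1:ℝ) / (n + 1)) atTop (𝓝 0) :=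
      tendsto_one_div_add_atTop_nhds_zero_nat
    have h2 : Tendsto (fun n : ℕ => 1 - 1 / ((n:ℝ) + 1) + 1 / ((n:ℝ) + 1) * (h x).toReal)
        atTop (𝓝 1) := by
      have h3 : Tendsto (fun n : ℕ => 1 + 1 / ((n:ℝ) + 1) * ((h x).toReal - 1))
          atTop (𝓝 (1 + 0 * ((h x).toReal - 1))) :=
        tendsto_const_nhds.add (h1.mul_const _)
      rw [zero_mul, add_zero] at h3
      exact h3.congr (fun n => by ring)
    have h4 := (hφcont.tendsto 1).comp h2
    rw [hφ.at_one] at h4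
    have h5 := ENNReal.tendsto_ofReal h4
    rw [ENNReal.ofReal_zero] at h5
    exact h5
  have hDCT := tendsto_lintegral_of_dominated_convergence Dbound hFmeas hFle hDfin hFlim
  rw [lintegral_zero] at hDCT
  have hδ' : (0:ℝ≥0∞) < ENNReal.ofReal δ := ENNReal.ofReal_pos.mpr hδ
  obtain ⟨n, hn⟩ := (hDCT.eventually_lt_const hδ').exists
  -- the perturbed measure
  set ε : ℝ := 1 / ((n:ℝ) + 1) with hεdef
  obtain ⟨hε0, hε1⟩ := hεn n
  set P₁ : Measure ℝ := ENNReal.ofReal (1 - ε) • P₀ + ENNReal.ofReal ε • Q with hP₁def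
  haveI hfin1 : IsFiniteMeasure (ENNReal.ofReal (1 - ε) • P₀) := by
    constructor
    rw [Measure.smul_apply, smul_eq_mul, measure_univ, mul_one]
    exact ENNReal.ofReal_lt_top
  haveI hfin2 : IsFiniteMeasure (ENNReal.ofReal ε • Q) := by
    constructor
    rw [Measure.smul_apply, smul_eq_mul, measure_univ, mul_one]
    exact ENNReal.ofReal_lt_top
  have hP₁prob : IsProbabilityMeasure P₁ := by
    constructor
    rw [hP₁def, Measure.add_apply, Measure.smul_apply, Measure.smul_apply, smul_eq_mul,
      smul_eq_mul, measure_univ, measure_univ, mul_one, mul_one,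
      ← ENNReal.ofReal_add (by linarith) hε0.le, show (1:ℝ) - ε + ε = 1 by ring,
      ENNReal.ofReal_one]
  have hP₁ac : P₁ ≪ P₀ := by
    refine Measure.AbsolutelyContinuous.mk (fun A hA h0 => ?_)
    rw [hP₁def, Measure.add_apply, Measure.smul_apply, Measure.smul_apply, h0, hQac h0,
      smul_zero, smul_zero, add_zero]
  have hrn : P₁.rnDeriv P₀ =ᵐ[P₀] fun x => ENNReal.ofReal (1 - ε) + ENNReal.ofReal ε * h x := by
    have h1 := Measure.rnDeriv_add (ENNReal.ofReal (1 - ε) • P₀) (ENNReal.ofReal ε • Q) P₀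
    have h2 := Measure.rnDeriv_smul_left_of_ne_top P₀ P₀
      (r := ENNReal.ofReal (1 - ε)) ENNReal.ofReal_ne_top
    have h3 := Measure.rnDeriv_smul_left_of_ne_top Q P₀
      (r := ENNReal.ofReal ε) ENNReal.ofReal_ne_top
    have h4 := Measure.rnDeriv_self P₀
    rw [hP₁def]
    filter_upwards [h1, h2, h3, h4] with x e1 e2 e3 e4
    rw [e1, Pi.add_apply, e2, e3, Pi.smul_apply, Pi.smul_apply, e4, smul_eq_mul,
      smul_eq_mul, mul_one]
    
  have hdiv : phiDiv φ P₁ P₀ ≤ ENNReal.ofReal δ := by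
    rw [phiDiv, if_pos hP₁ac]
    have hcongr : ∫⁻ x, ENNReal.ofReal (φ ((P₁.rnDeriv P₀ x).toReal)) ∂P₀
        = ∫⁻ x, F n x ∂P₀ := by
      apply lintegral_congr_ae
      filter_upwards [hrn, hhfin] with x e1 e2
      rw [e1]
      have harg : (ENNReal.ofReal (1 - ε) + ENNReal.ofReal ε * h x).toReal
          = 1 - ε + ε * (h x).toReal := by
        rw [ENNReal.toReal_add ENNReal.ofReal_ne_top
          (ENNReal.mul_ne_top ENNReal.ofReal_ne_top e2.ne), ENNReal.toReal_mul,
          ENNReal.toReal_ofReal (by linarith), ENNReal.toReal_ofReal hε0.le]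
      rw [harg]
    rw [hcongr]
    exact hn.le
  -- survival function of P₁
  have hsurvP₁ : ∀ t, survival P₁ t = (1 - ε) * S t + ε * S t ^ θ := by
    intro t
    rw [survival, hP₁def, Measure.add_apply, Measure.smul_apply, Measure.smul_apply,
      smul_eq_mul, smul_eq_mul, hQIoi t, ← ofReal_survival P₀ t,
      ← ENNReal.ofReal_mul (by linarith), ← ENNReal.ofReal_mul hε0.le,
      ← ENNReal.ofReal_add (mul_nonneg (by linarith) (hSnn t))
        (mul_nonneg hε0.le (Real.rpow_nonneg (hSnn t) θ)),
      ENNReal.toReal_ofReal (add_nonneg (mul_nonneg (by linarith) (hSnn t))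
        (mul_nonneg hε0.le (Real.rpow_nonneg (hSnn t) θ)))]
  -- conclusion
  refine ⟨P₁, ⟨hP₁prob, hdiv⟩, ?_⟩
  intro x hx
  have hSx := hP x hx
  have hxγpos : 0 < x ^ (-γ) := Real.rpow_pos_of_pos hx _
  have hnum2 : Tendsto (fun t => (S (t * x) / S t) ^ θ) atTop (𝓝 (x ^ (-γ'))) := by
    have hcont : ContinuousAt (fun y : ℝ => y ^ θ) (x ^ (-γ)) :=
      Real.continuousAt_rpow_const _ _ (Or.inl hxγpos.ne')
    have h5 := hcont.tendsto.comp hSx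
    simp only [Function.comp_def] at h5
    have h6 : (x ^ (-γ)) ^ θ = x ^ (-γ') := by
      rw [← Real.rpow_mul hx.le]
      congr 1
      rw [hθdef]
      field_simp
    rw [← h6]
    exact h5
  have hzero : Tendsto (fun t => S t ^ (1 - θ)) atTop (𝓝 0) := by
    have hcont : ContinuousAt (fun y : ℝ => y ^ (1 - θ)) 0 :=
      Real.continuousAt_rpow_const _ _ (Or.inr (by linarith))
    have h5 := hcont.tendsto.comp hS0
    simp only [Function.comp_def] at h5
    rwa [Real.zero_rpow (by linarith : (0:ℝ) < 1 - θ).ne'] at h5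
  have hnum1 : Tendsto (fun t => S (t * x) / S t * S t ^ (1 - θ)) atTop (𝓝 0) := by
    have h5 := hSx.mul hzero
    rwa [mul_zero] at h5
  have hden : Tendsto (fun t => (1 - ε) * S t ^ (1 - θ) + ε) atTop (𝓝 ε) := by
    have h5 := (hzero.const_mul (1 - ε)).add_const ε
    rwa [mul_zero, zero_add] at h5
  have hquot : Tendsto (fun t =>
      ((1 - ε) * (S (t * x) / S t * S t ^ (1 - θ)) + ε * (S (t * x) / S t) ^ θ) /
        ((1 - ε) * S t ^ (1 - θ) + ε)) atTop (𝓝 (x ^ (-γ'))) := by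
    have h5 := ((hnum1.const_mul (1 - ε)).add (hnum2.const_mul ε)).div hden hε0.ne'
    have h6 : ((1 - ε) * 0 + ε * x ^ (-γ')) / ε = x ^ (-γ') := by
      rw [mul_zero, zero_add, mul_div_cancel_left₀ _ hε0.ne']
    rwa [h6] at h5
  refine hquot.congr (fun t => ?_)
  have h1 : 0 < S t := hSpos t
  have h2 : 0 < S (t * x) := hSpos (t * x)
  have h3 : 0 < S t ^ θ := Real.rpow_pos_of_pos h1 θ
  have hd : 0 < (1 - ε) * S t + ε * S t ^ θ := by nlinarith
  rw [hsurvP₁ (t * x), hsurvP₁ t]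
  have h4 : S t ^ (1 - θ) = S t / S t ^ θ := by
    rw [eq_div_iff h3.ne', ← Real.rpow_add h1]
    norm_num
  have h5 : (S (t * x) / S t) ^ θ = S (t * x) ^ θ / S t ^ θ := Real.div_rpow h2.le h1.le θ
  rw [h4, h5]
  field_simp

end
end

section
/- Let φ : [0,∞) → [0,∞] be a lower semicontinuous convex function with φ(1) = 0, δ ≥ 0, let L : ℝ^d → ℝ be Borel measurable, let P₀ be a probability measure on ℝ^d, and set P_Z = P₀ ∘ L^{−1}. Then for any functional ρ mapping probability measures on ℝ to [0,∞], sup_{P̃ ∈ B_{φ,δ}(P₀)} ρ(P̃ ∘ L^{−1}) = sup_{P ∈ B_{φ,δ}(P_Z)} ρ(P), where the first supremum is over probability measures on ℝ^d and the second over probability measures on ℝ. -/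
open MeasureTheory Filter Set
open scoped ENNReal NNReal Topology Classical

noncomputable section

section Aux

open ProbabilityTheory

/-- A convex function on `Ici 0` which is lower semicontinuous and vanishes at `1`
is continuous on `Ici 0`. -/
lemma phi_continuousOn (φ : ℝ → ℝ) (hconv : ConvexOn ℝ (Ici 0) φ)
    (hlsc : LowerSemicontinuous φ) (hone : φ 1 = 0) :
    ContinuousOn φ (Ici 0) := by
  intro x hx
  rcases eq_or_lt_of_le (mem_Ici.1 hx : (0:ℝ) ≤ x) with h0 | h0
  · -- continuity at 0 within Ici 0
    subst h0
    have hub : ∀ t ∈ Icc (0:ℝ) 1, φ t ≤ (1 - t) * φ 0 := by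
      intro t ht
      have h := hconv.2 (self_mem_Ici) (mem_Ici.2 zero_le_one)
        (by linarith [ht.2] : (0:ℝ) ≤ 1 - t) ht.1 (by ring)
      simpa [hone, smul_eq_mul, mul_comm] using h
    have : Tendsto φ (𝓝[Ici 0] 0) (𝓝 (φ 0)) := by
      rw [tendsto_order]
      constructor
      · intro a ha
        exact ((hlsc 0 a ha).filter_mono nhdsWithin_le_nhds)
      · intro a ha
        have h1 : Tendsto (fun t : ℝ => (1 - t) * φ 0) (𝓝[Ici 0] 0) (𝓝 (φ 0)) := by
          have : Tendsto (fun t : ℝ => (1 - t) * φ 0) (𝓝 0) (𝓝 ((1 - 0) * φ 0)) :=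
            (tendsto_const_nhds.sub tendsto_id).mul_const _
          simpa using this.mono_left nhdsWithin_le_nhds
        have h2 : ∀ᶠ t in 𝓝[Ici 0] 0, (1 - t) * φ 0 < a := h1.eventually_lt_const ha
        have h3 : ∀ᶠ t in 𝓝[Ici 0] 0, t ∈ Icc (0:ℝ) 1 := by
          have hlt : ∀ᶠ t in 𝓝[Ici (0:ℝ)] 0, t < 1 :=
            eventually_of_mem (nhdsWithin_le_nhds (Iio_mem_nhds (by norm_num))) fun x hx => hx
          filter_upwards [hlt, eventually_mem_nhdsWithin] with t h1t h2t
          exact ⟨h2t, le_of_lt h1t⟩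
        filter_upwards [h2, h3] with t h2t h3t
        exact lt_of_le_of_lt (hub t h3t) h2t
    exact this
  · have hI : ContinuousOn φ (interior (Ici (0:ℝ))) := hconv.continuousOn_interior
    rw [interior_Ici] at hI
    exact (hI.continuousAt (Ioi_mem_nhds h0)).continuousWithinAt

/-- Data-processing inequality for `phiDiv` under a deterministic (measurable) map. -/
lemma phiDiv_map_le (d : ℕ) (φ : ℝ → ℝ)
    (hconv : ConvexOn ℝ (Ici 0) φ) (hlsc : LowerSemicontinuous φ)
    (hnonneg : ∀ x : ℝ, 0 ≤ x → 0 ≤ φ x) (hone : φ 1 = 0)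
    (L : (Fin d → ℝ) → ℝ) (hL : Measurable L)
    (P P₀ : Measure (Fin d → ℝ)) [IsProbabilityMeasure P₀] [IsProbabilityMeasure P]
    (hac : P ≪ P₀) (hfin : phiDiv φ P P₀ ≠ ⊤) :
    phiDiv φ (P.map L) (P₀.map L) ≤ phiDiv φ P P₀ := by
  have hφm : Measurable φ := hlsc.measurable
  have hφcont : ContinuousOn φ (Ici 0) := phi_continuousOn φ hconv hlsc hone
  have hpair : Measurable (fun x : Fin d → ℝ => (L x, x)) := hL.prodMk measurable_id
  set μ : Measure (ℝ × (Fin d → ℝ)) := P₀.map (fun x => (L x, x)) with hμdef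
  haveI : IsProbabilityMeasure μ := Measure.isProbabilityMeasure_map hpair.aemeasurable
  have hfst : μ.fst = P₀.map L := Measure.fst_map_prodMk measurable_id
  have hdis : μ.fst ⊗ₘ μ.condKernel = μ := μ.disintegrate _
  -- key integral identity
  have key : ∀ F : ℝ × (Fin d → ℝ) → ℝ≥0∞, Measurable F →
      ∫⁻ z, (∫⁻ x, F (z, x) ∂μ.condKernel z) ∂(P₀.map L) = ∫⁻ x, F (L x, x) ∂P₀ := by
    intro F hF
    rw [← hfst, ← Measure.lintegral_compProd hF, hdis, hμdef, lintegral_map hF hpair]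
  set w : (Fin d → ℝ) → ℝ≥0∞ := P.rnDeriv P₀ with hwdef
  have hw : Measurable w := Measure.measurable_rnDeriv _ _
  set g : ℝ → ℝ≥0∞ := (P.map L).rnDeriv (P₀.map L) with hgdef
  have hg : Measurable g := Measure.measurable_rnDeriv _ _
  have hmapac : P.map L ≪ P₀.map L := hac.map hL
  set G : ℝ → ℝ≥0∞ := fun z => ∫⁻ x, w x ∂μ.condKernel z with hGdef
  have hGmeas : Measurable G := hw.lintegral_kernel
  -- Step A : G is a version of the RN derivative of the pushforward
  have hGg : G =ᵐ[P₀.map L] g := by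
    refine ae_eq_of_forall_setLIntegral_eq_of_sigmaFinite hGmeas hg ?_
    intro t ht _
    rw [Measure.setLIntegral_rnDeriv hmapac t]
    have hFmeas : Measurable fun p : ℝ × (Fin d → ℝ) =>
        t.indicator (fun _ => (1:ℝ≥0∞)) p.1 * w p.2 :=
      ((measurable_one.indicator ht).comp measurable_fst).mul (hw.comp measurable_snd)
    calc ∫⁻ z in t, G z ∂(P₀.map L)
        = ∫⁻ z, t.indicator (fun _ => (1:ℝ≥0∞)) z * G z ∂(P₀.map L) := by
          rw [← lintegral_indicator ht]
          congr 1; ext z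
          by_cases hz : z ∈ t <;> simp [hz]
      _ = ∫⁻ z, (∫⁻ x, t.indicator (fun _ => (1:ℝ≥0∞)) z * w x ∂μ.condKernel z)
            ∂(P₀.map L) := by
          congr 1; ext z
          rw [lintegral_const_mul _ hw]
      _ = ∫⁻ x, t.indicator (fun _ => (1:ℝ≥0∞)) (L x) * w x ∂P₀ := key _ hFmeas
      _ = ∫⁻ x, (L ⁻¹' t).indicator (fun _ => (1:ℝ≥0∞)) x * w x ∂P₀ :=
          lintegral_congr fun x => by by_cases hx : L x ∈ t <;> simp [hx]
      _ = ∫⁻ x in L ⁻¹' t, w x ∂P₀ := by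
          rw [← lintegral_indicator (hL ht)]
          congr 1; ext x
          by_cases hx : x ∈ L ⁻¹' t <;> simp [hx]
      _ = P (L ⁻¹' t) := by
          haveI : P.HaveLebesgueDecomposition P₀ := Measure.haveLebesgueDecomposition_of_sigmaFinite P P₀
          exact Measure.setLIntegral_rnDeriv hac _
      _ = (P.map L) t := (Measure.map_apply hL ht).symm
  -- a.e. finiteness facts
  have hglt : ∀ᵐ z ∂(P₀.map L), g z < ∞ := Measure.rnDeriv_lt_top _ _
  have hfib : ∀ᵐ z ∂(P₀.map L), ∀ᵐ x ∂μ.condKernel z, w x < ∞ := by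
    have hset : MeasurableSet {p : ℝ × (Fin d → ℝ) | w p.2 < ∞} :=
      (hw.comp measurable_snd) measurableSet_Iio
    have hμae : ∀ᵐ p ∂μ, w p.2 < ∞ := by
      rw [hμdef, ae_map_iff hpair.aemeasurable hset]
      exact Measure.rnDeriv_lt_top _ _
    rw [← hdis] at hμae
    have := Measure.ae_ae_of_ae_compProd hμae
    rwa [hfst] at this
  set Φ : (Fin d → ℝ) → ℝ := fun x => φ ((w x).toReal) with hΦdef
  have hΦmeas : Measurable Φ := hφm.comp hw.ennreal_toReal
  have hΦnn : ∀ x, 0 ≤ Φ x := fun x => hnonneg _ ENNReal.toReal_nonneg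
  have hΦint_top : ∫⁻ x, ENNReal.ofReal (Φ x) ∂P₀ ≠ ⊤ := by
    have : phiDiv φ P P₀ = ∫⁻ x, ENNReal.ofReal (Φ x) ∂P₀ := by
      rw [phiDiv, if_pos hac]
    rw [← this]; exact hfin
  set Ψ : ℝ → ℝ≥0∞ := fun z => ∫⁻ x, ENNReal.ofReal (Φ x) ∂μ.condKernel z with hΨdef
  have hΨmeas : Measurable Ψ :=
    (ENNReal.measurable_ofReal.comp hΦmeas).lintegral_kernel
  have hΨofr : Measurable fun p : ℝ × (Fin d → ℝ) => ENNReal.ofReal (Φ p.2) :=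
    (ENNReal.measurable_ofReal.comp hΦmeas).comp measurable_snd
  have hΨint : ∫⁻ z, Ψ z ∂(P₀.map L) = ∫⁻ x, ENNReal.ofReal (Φ x) ∂P₀ :=
    key (fun p => ENNReal.ofReal (Φ p.2)) hΨofr
  have hΨlt : ∀ᵐ z ∂(P₀.map L), Ψ z < ∞ := by
    refine ae_lt_top hΨmeas ?_
    rw [hΨint]; exact hΦint_top
  -- Jensen pointwise a.e.
  have hjen : ∀ᵐ z ∂(P₀.map L), ENNReal.ofReal (φ ((g z).toReal)) ≤ Ψ z := by
    filter_upwards [hGg, hglt, hfib, hΨlt] with z hGz hgz hwz hψz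
    haveI : IsProbabilityMeasure (μ.condKernel z) :=
      IsMarkovKernel.isProbabilityMeasure z
    have hGlt : (∫⁻ x, w x ∂μ.condKernel z) < ∞ := by
      change G z < ∞; rw [hGz]; exact hgz
    have hwint : Integrable (fun x => (w x).toReal) (μ.condKernel z) :=
      integrable_toReal_of_lintegral_ne_top hw.aemeasurable hGlt.ne
    have hΦzint : Integrable Φ (μ.condKernel z) := by
      refine ⟨hΦmeas.aestronglyMeasurable, ?_⟩
      rw [hasFiniteIntegral_iff_ofReal (ae_of_all _ hΦnn)]
      exact hψz
    have hval : ∫ x, (w x).toReal ∂μ.condKernel z = (g z).toReal := by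
      rw [integral_toReal hw.aemeasurable hwz]
      change (G z).toReal = _
      rw [hGz]
    have hJ : φ ((g z).toReal) ≤ ∫ x, Φ x ∂μ.condKernel z := by
      rw [← hval]
      exact hconv.map_integral_le hφcont isClosed_Ici
        (ae_of_all _ fun x => ENNReal.toReal_nonneg) hwint hΦzint
    calc ENNReal.ofReal (φ ((g z).toReal))
        ≤ ENNReal.ofReal (∫ x, Φ x ∂μ.condKernel z) := ENNReal.ofReal_le_ofReal hJ
      _ = Ψ z := ofReal_integral_eq_lintegral_ofReal hΦzint (ae_of_all _ hΦnn)
  -- assemble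
  calc phiDiv φ (P.map L) (P₀.map L)
      = ∫⁻ z, ENNReal.ofReal (φ ((g z).toReal)) ∂(P₀.map L) := by
        rw [phiDiv, if_pos hmapac]
    _ ≤ ∫⁻ z, Ψ z ∂(P₀.map L) := lintegral_mono_ae hjen
    _ = ∫⁻ x, ENNReal.ofReal (Φ x) ∂P₀ := hΨint
    _ = phiDiv φ P P₀ := by rw [phiDiv, if_pos hac]

/-- Lifting: any probability measure in the divergence ball around the pushforward
is itself a pushforward of a measure in the ball around `P₀`, with equal divergence. -/
lemma phiDiv_lift (d : ℕ) (φ : ℝ → ℝ) (hlsc : LowerSemicontinuous φ)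
    (L : (Fin d → ℝ) → ℝ) (hL : Measurable L)
    (P₀ : Measure (Fin d → ℝ)) [IsProbabilityMeasure P₀]
    (Q : Measure ℝ) [IsProbabilityMeasure Q] (hQ : Q ≪ P₀.map L) :
    ∃ P : Measure (Fin d → ℝ), IsProbabilityMeasure P ∧ P.map L = Q ∧
      phiDiv φ P P₀ = phiDiv φ Q (P₀.map L) := by
  have hφm : Measurable φ := hlsc.measurable
  set g : ℝ → ℝ≥0∞ := Q.rnDeriv (P₀.map L) with hgdef
  have hg : Measurable g := Measure.measurable_rnDeriv _ _
  set P : Measure (Fin d → ℝ) := P₀.withDensity (fun x => g (L x)) with hPdef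
  have hmap : P.map L = Q := by
    have h1 : P.map L = (P₀.map L).withDensity g := by
      ext s hs
      rw [Measure.map_apply hL hs, hPdef, withDensity_apply _ (hL hs),
        withDensity_apply _ hs, ← setLIntegral_map hs hg hL]
    rw [h1, Measure.withDensity_rnDeriv_eq Q _ hQ]
  have hprob : IsProbabilityMeasure P := by
    constructor
    have : P Set.univ = (P.map L) Set.univ := by
      rw [Measure.map_apply hL MeasurableSet.univ, Set.preimage_univ]
    rw [this, hmap, measure_univ]
  have hacP : P ≪ P₀ := withDensity_absolutelyContinuous _ _
  have hrn : P.rnDeriv P₀ =ᵐ[P₀] fun x => g (L x) :=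
    Measure.rnDeriv_withDensity P₀ (hg.comp hL)
  refine ⟨P, hprob, hmap, ?_⟩
  rw [phiDiv, if_pos hacP, phiDiv, if_pos hQ]
  calc ∫⁻ x, ENNReal.ofReal (φ ((P.rnDeriv P₀ x).toReal)) ∂P₀
      = ∫⁻ x, ENNReal.ofReal (φ ((g (L x)).toReal)) ∂P₀ :=
        lintegral_congr_ae (hrn.mono fun x hx => by dsimp only; rw [hx])
    _ = ∫⁻ z, ENNReal.ofReal (φ ((g z).toReal)) ∂(P₀.map L) :=
        (lintegral_map (ENNReal.measurable_ofReal.comp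
          (hφm.comp hg.ennreal_toReal)) hL).symm

end Aux

/-- lifting the DRO to the loss level: worst-case evaluation of any
law-invariant functional over a φ-divergence ball around `P₀` equals worst-case
evaluation over the φ-divergence ball around the pushforward `P_Z = P₀ ∘ L⁻¹`. -/
theorem phiBall_pushforward_sup_eq
    (d : ℕ) (φ : ℝ → ℝ)
    (hconv : ConvexOn ℝ (Ici 0) φ) (hlsc : LowerSemicontinuous φ)
    (hnonneg : ∀ x : ℝ, 0 ≤ x → 0 ≤ φ x) (hone : φ 1 = 0)
    (δ : ℝ) (hδ : 0 ≤ δ)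
    (L : (Fin d → ℝ) → ℝ) (hL : Measurable L)
    (P₀ : Measure (Fin d → ℝ)) [IsProbabilityMeasure P₀]
    (ρ : Measure ℝ → ℝ≥0∞) :
    ⨆ P ∈ phiBall φ δ P₀, ρ (P.map L) = ⨆ P ∈ phiBall φ δ (P₀.map L), ρ P := by
  have hδtop : (ENNReal.ofReal δ) ≠ ⊤ := ENNReal.ofReal_ne_top
  apply le_antisymm
  · refine iSup₂_le fun P hP => ?_
    haveI := hP.1
    have h2 := hP.2
    have hfin : phiDiv φ P P₀ ≠ ⊤ := by
      intro h
      rw [h] at h2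
      exact hδtop (top_le_iff.1 h2)
    have hac : P ≪ P₀ := by
      by_contra h
      rw [phiDiv, if_neg h] at hfin
      exact hfin rfl
    have hmem : P.map L ∈ phiBall φ δ (P₀.map L) :=
      ⟨Measure.isProbabilityMeasure_map hL.aemeasurable,
        (phiDiv_map_le d φ hconv hlsc hnonneg hone L hL P P₀ hac hfin).trans h2⟩
    exact le_iSup₂ (f := fun (P : Measure ℝ) (_ : P ∈ phiBall φ δ (P₀.map L)) => ρ P)
      (P.map L) hmem
  · refine iSup₂_le fun Q hQ => ?_
    haveI := hQ.1
    have h2 := hQ.2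
    have hacQ : Q ≪ P₀.map L := by
      by_contra h
      rw [phiDiv, if_neg h] at h2
      exact hδtop (top_le_iff.1 h2)
    obtain ⟨P, hP1, hP2, hP3⟩ := phiDiv_lift d φ hlsc L hL P₀ Q hacQ
    have hmem : P ∈ phiBall φ δ P₀ := ⟨hP1, by rw [hP3]; exact h2⟩
    calc ρ Q = ρ (P.map L) := by rw [hP2]
      _ ≤ ⨆ P ∈ phiBall φ δ P₀, ρ (P.map L) :=
        le_iSup₂ (f := fun (P : Measure (Fin d → ℝ)) (_ : P ∈ phiBall φ δ P₀) => ρ (P.map L))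
          P hmem

end
end
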